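/- Let K ⊆ {x_n ≥ 0} ⊆ ℝⁿ be an unbounded convex polyhedron whose recession cone C has dimension n and with eₙ ∈ Int(C). Then the restriction of the orthogonal projection π : ℝⁿ → ℝ^{n-1} × {0}, (x', x_n) ↦ (x', 0), to the boundary ∂K is a homeomorphism onto ℝ^{n-1} × {0}. -/

import Mathlib

theorem stmt9 (n m : ℕ)
    (f : Fin m → (EuclideanSpace ℝ (Fin (n + 1)) →ᵃ[ℝ] ℝ))
    (K : Set (EuclideanSpace ℝ (Fin (n + 1))))
    (hK : K = {x | ∀ i, 0 ≤ f i x})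
    (hub : ¬ Bornology.IsBounded K)
    (hsub : K ⊆ {x | 0 ≤ x (Fin.last n)})
    (C : Set (EuclideanSpace ℝ (Fin (n + 1))))
    (hC : C = {v | ∀ x ∈ K, ∀ t : ℝ, 0 ≤ t → x + t • v ∈ K})
    (hen : EuclideanSpace.single (Fin.last n) (1 : ℝ) ∈ interior C) :
    ∃ φ : frontier K ≃ₜ {y : EuclideanSpace ℝ (Fin (n + 1)) | y (Fin.last n) = 0},
      ∀ x : frontier K, (φ x : EuclideanSpace ℝ (Fin (n + 1))) =
        (WithLp.toLp 2 (Function.update (x : EuclideanSpace ℝ (Fin (n + 1))) (Fin.last n) 0) :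
          EuclideanSpace ℝ (Fin (n + 1))) := by
  classical
  set e : EuclideanSpace ℝ (Fin (n + 1)) := EuclideanSpace.single (Fin.last n) (1 : ℝ) with he
  -- K is closed
  have hKclosed : IsClosed K := by
    rw [hK, Set.setOf_forall]
    exact isClosed_iInter fun i =>
      IsClosed.preimage (f i).continuous_of_finiteDimensional isClosed_Ici
  -- K is nonempty
  have hKne : K.Nonempty := by
    by_contra h
    rw [Set.not_nonempty_iff_eq_empty] at h
    exact hub (h ▸ Bornology.isBounded_empty)
  obtain ⟨p, hp⟩ := hKne
  -- a ball around e inside C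
  obtain ⟨δ, hδ, hball⟩ := Metric.mem_nhds_iff.mp (mem_interior_iff_mem_nhds.mp hen)
  have hCdef : ∀ v ∈ C, ∀ x ∈ K, ∀ t : ℝ, 0 ≤ t → x + t • v ∈ K := by
    rw [hC]; exact fun v hv => hv
  -- key reachability lemma
  have reach : ∀ z ∈ K, ∀ (w : EuclideanSpace ℝ (Fin (n + 1))) (t : ℝ), ‖w - z‖ < t * δ → w + t • e ∈ K := by
    intro z hz w t hwt
    have ht : 0 < t := by
      by_contra h
      push_neg at h
      nlinarith [norm_nonneg (w - z)]
    have hv : t⁻¹ • (w - z) + e ∈ Metric.ball e δ := by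
      rw [Metric.mem_ball, dist_eq_norm, add_sub_cancel_right, norm_smul,
        Real.norm_eq_abs, abs_of_pos (inv_pos.mpr ht)]
      calc t⁻¹ * ‖w - z‖ < t⁻¹ * (t * δ) := by
            exact mul_lt_mul_of_pos_left hwt (inv_pos.mpr ht)
        _ = δ := by field_simp
    have hmem := hCdef _ (hball hv) z hz t ht.le
    have heq : z + t • (t⁻¹ • (w - z) + e) = w + t • e := by
      rw [smul_add, smul_smul, mul_inv_cancel₀ ht.ne', one_smul]
      abel
    rwa [heq] at hmem
  -- the vertical sections and the lower boundary function g
  set S : EuclideanSpace ℝ (Fin (n + 1)) → Set ℝ := fun y => {t : ℝ | y + t • e ∈ K} with hS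
  set g : EuclideanSpace ℝ (Fin (n + 1)) → ℝ := fun y => sInf (S y) with hg
  have hcoord : ∀ (y : EuclideanSpace ℝ (Fin (n + 1))) (t : ℝ), (y + t • e) (Fin.last n) = y (Fin.last n) + t := by
    intro y t
    rw [PiLp.add_apply, PiLp.smul_apply, he, EuclideanSpace.single_apply, if_pos rfl, smul_eq_mul, mul_one]
  have hSne : ∀ y : EuclideanSpace ℝ (Fin (n + 1)), (S y).Nonempty := by
    intro y
    refine ⟨‖y - p‖ / δ + 1, reach p hp y _ ?_⟩
    have h1 : (‖y - p‖ / δ + 1) * δ = ‖y - p‖ + δ := by field_simp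
    rw [h1]; linarith
  have hSbdd : ∀ y : EuclideanSpace ℝ (Fin (n + 1)), y (Fin.last n) = 0 → BddBelow (S y) := by
    intro y hy
    refine ⟨0, fun t ht => ?_⟩
    have h1 : 0 ≤ (y + t • e) (Fin.last n) := hsub ht
    rw [hcoord, hy, zero_add] at h1
    exact h1
  have hSclosed : ∀ y : EuclideanSpace ℝ (Fin (n + 1)), IsClosed (S y) := by
    intro y
    have hc : Continuous fun t : ℝ => y + t • e :=
      continuous_const.add (continuous_id.smul continuous_const)
    exact hKclosed.preimage hc
  have hgmem : ∀ y : EuclideanSpace ℝ (Fin (n + 1)), y (Fin.last n) = 0 → y + g y • e ∈ K := fun y hy =>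
    (hSclosed y).csInf_mem (hSne y) (hSbdd y hy)
  -- points strictly above g are interior
  have hintr : ∀ y : EuclideanSpace ℝ (Fin (n + 1)), y (Fin.last n) = 0 → ∀ t, g y < t → y + t • e ∈ interior K := by
    intro y hy t hgt
    rw [mem_interior]
    refine ⟨Metric.ball (y + t • e) ((t - g y) * δ), ?_, Metric.isOpen_ball,
      Metric.mem_ball_self (mul_pos (by linarith) hδ)⟩
    intro w hw
    rw [Metric.mem_ball, dist_eq_norm] at hw
    have h2 : ‖(w - (t - g y) • e) - (y + g y • e)‖ < (t - g y) * δ := by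
      have h3 : (w - (t - g y) • e) - (y + g y • e) = w - (y + t • e) := by
        rw [sub_smul]; abel
      rw [h3]; exact hw
    have h4 := reach _ (hgmem y hy) (w - (t - g y) • e) (t - g y) h2
    rwa [sub_add_cancel] at h4
  -- the graph point is on the frontier
  have hfr1 : ∀ y : EuclideanSpace ℝ (Fin (n + 1)), y (Fin.last n) = 0 → y + g y • e ∈ frontier K := by
    intro y hy
    rw [hKclosed.frontier_eq]
    refine ⟨hgmem y hy, fun hint => ?_⟩
    obtain ⟨ε, hε, hb⟩ := Metric.isOpen_iff.mp isOpen_interior _ hint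
    have hmem : (g y - ε / 2) ∈ S y := by
      show y + (g y - ε / 2) • e ∈ K
      have h5 : y + (g y - ε / 2) • e ∈ Metric.ball (y + g y • e) ε := by
        rw [Metric.mem_ball, dist_eq_norm]
        have h6 : y + (g y - ε / 2) • e - (y + g y • e) = (-(ε / 2)) • e := by
          rw [sub_smul, neg_smul]; abel
        rw [h6, norm_smul, Real.norm_eq_abs, abs_neg, abs_of_pos (half_pos hε), he,
          EuclideanSpace.norm_single, norm_one, mul_one]
        linarith
      exact interior_subset (hb h5)
    have h7 : g y ≤ g y - ε / 2 := csInf_le (hSbdd y hy) hmem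
    linarith
  -- decomposition of a point into horizontal part plus vertical part
  have hupd : ∀ x y : EuclideanSpace ℝ (Fin (n + 1)),
      y = WithLp.toLp 2 (Function.update x (Fin.last n) 0) → y + (x (Fin.last n)) • e = x := by
    intro x y hyx
    subst hyx
    ext j
    rw [PiLp.add_apply, PiLp.smul_apply, he, EuclideanSpace.single_apply]
    by_cases hj : j = Fin.last n
    · subst hj; simp
    · rw [PiLp.toLp_apply, Function.update_of_ne hj, if_neg hj, smul_zero, add_zero]
  have hupd0 : ∀ x : EuclideanSpace ℝ (Fin (n + 1)),
      (WithLp.toLp 2 (Function.update x (Fin.last n) 0) : EuclideanSpace ℝ (Fin (n + 1))) (Fin.last n) = 0 :=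
    fun x => Function.update_self _ _ _
  -- frontier points lie exactly on the graph of g
  have hfr2 : ∀ x ∈ frontier K, x (Fin.last n) = g (WithLp.toLp 2 (Function.update x (Fin.last n) 0)) := by
    intro x hx
    set y : EuclideanSpace ℝ (Fin (n + 1)) := WithLp.toLp 2 (Function.update x (Fin.last n) 0) with hy
    have hy0 : y (Fin.last n) = 0 := hupd0 x
    have hxK : x ∈ K := (hKclosed.frontier_eq ▸ hx).1
    have hmem : x (Fin.last n) ∈ S y := by
      show y + (x (Fin.last n)) • e ∈ K
      rw [hupd x y hy]; exact hxK
    have hle : g y ≤ x (Fin.last n) := csInf_le (hSbdd y hy0) hmem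
    rcases eq_or_lt_of_le hle with hEq | hlt
    · exact hEq.symm
    · exfalso
      have h8 := hintr y hy0 _ hlt
      rw [hupd x y hy] at h8
      exact (hKclosed.frontier_eq ▸ hx).2 h8
  -- Lipschitz estimate for g
  have hlip : ∀ y y' : EuclideanSpace ℝ (Fin (n + 1)),
      y (Fin.last n) = 0 → y' (Fin.last n) = 0 →
      g y' ≤ g y + ‖y' - y‖ / δ := by
    intro y y' hy hy'
    have key : ∀ ε > (0:ℝ), g y' ≤ (g y + ‖y' - y‖ / δ) + ε := by
      intro ε hε
      have h1 : ‖(y' + g y • e) - (y + g y • e)‖ < (‖y' - y‖ / δ + ε) * δ := by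
        have h2 : (y' + g y • e) - (y + g y • e) = y' - y := by abel
        have h3 : (‖y' - y‖ / δ + ε) * δ = ‖y' - y‖ + ε * δ := by field_simp
        rw [h2, h3]
        nlinarith [mul_pos hε hδ]
      have h4 := reach _ (hgmem y hy) (y' + g y • e) _ h1
      have h5 : y' + g y • e + (‖y' - y‖ / δ + ε) • e
          = y' + (g y + (‖y' - y‖ / δ + ε)) • e := by
        module
      rw [h5] at h4
      have h6 : g y' ≤ g y + (‖y' - y‖ / δ + ε) := csInf_le (hSbdd y' hy') h4
      linarith
    exact le_of_forall_pos_le_add key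
  -- continuity of g on the hyperplane
  have hgcont : ContinuousOn g {y : EuclideanSpace ℝ (Fin (n + 1)) | y (Fin.last n) = 0} := by
    rw [Metric.continuousOn_iff]
    intro b hb ε hε
    refine ⟨ε * δ, mul_pos hε hδ, fun a ha hab => ?_⟩
    rw [Real.dist_eq, abs_sub_lt_iff]
    have h1 := hlip b a hb ha
    have h2 := hlip a b ha hb
    rw [dist_eq_norm] at hab
    have hsym : ‖b - a‖ = ‖a - b‖ := norm_sub_rev b a
    have hd1 : ‖a - b‖ / δ < ε := by rw [div_lt_iff₀ hδ]; linarith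
    have hd2 : ‖b - a‖ / δ < ε := by rw [div_lt_iff₀ hδ, hsym]; linarith
    constructor <;> linarith
  -- continuity of the projection
  have hπ : Continuous fun x : EuclideanSpace ℝ (Fin (n + 1)) =>
      (WithLp.toLp 2 (Function.update x (Fin.last n) 0) : EuclideanSpace ℝ (Fin (n + 1))) := by
    have heq2 : (fun x : EuclideanSpace ℝ (Fin (n + 1)) =>
          (WithLp.toLp 2 (Function.update x (Fin.last n) 0) : EuclideanSpace ℝ (Fin (n + 1))))
        = fun x : EuclideanSpace ℝ (Fin (n + 1)) => x - (x (Fin.last n)) • e := by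
      funext x
      ext j
      rw [PiLp.sub_apply, PiLp.smul_apply, he, EuclideanSpace.single_apply]
      by_cases hj : j = Fin.last n
      · subst hj; simp
      · rw [PiLp.toLp_apply, Function.update_of_ne hj, if_neg hj, smul_zero, sub_zero]
    rw [heq2]
    exact continuous_id.sub (((EuclideanSpace.proj (Fin.last n)).continuous).smul
      continuous_const)
  -- the homeomorphism
  set H := {y : EuclideanSpace ℝ (Fin (n + 1)) | y (Fin.last n) = 0} with hH
  have hy2 : ∀ y : H, (y : EuclideanSpace ℝ (Fin (n + 1))) (Fin.last n) = 0 := fun y => y.2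
  refine ⟨{
    toFun := fun x : frontier K =>
      ⟨WithLp.toLp 2 (Function.update (x : EuclideanSpace ℝ (Fin (n + 1))) (Fin.last n) 0), hupd0 _⟩
    invFun := fun y : H =>
      ⟨(y : EuclideanSpace ℝ (Fin (n + 1))) + g (y : EuclideanSpace ℝ (Fin (n + 1))) • e,
        hfr1 _ (hy2 y)⟩
    left_inv := ?_
    right_inv := ?_
    continuous_toFun := ?_
    continuous_invFun := ?_ }, fun x => rfl⟩
  · intro x
    apply Subtype.ext
    dsimp only
    rw [← hfr2 _ x.2]
    exact hupd (x : EuclideanSpace ℝ (Fin (n + 1))) _ rfl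
  · intro y
    apply Subtype.ext
    dsimp only
    ext j
    by_cases hj : j = Fin.last n
    · subst hj
      rw [PiLp.toLp_apply, Function.update_self]
      exact (hy2 y).symm
    · rw [PiLp.toLp_apply, Function.update_of_ne hj, PiLp.add_apply, PiLp.smul_apply, he,
        EuclideanSpace.single_apply, if_neg hj, smul_zero, add_zero]
  · exact ((hπ.comp continuous_subtype_val).subtype_mk _)
  · have hgH : Continuous fun y : H => g (y : EuclideanSpace ℝ (Fin (n + 1))) :=
      continuousOn_iff_continuous_restrict.mp hgcont
    exact ((continuous_subtype_val.add (hgH.smul continuous_const)).subtype_mk _)
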